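/- Let g(z) = z + b_2 z^2 + b_3 z^3 + ... be Janowski starlike in S*[D,E] with -1 ≤ E < D ≤ 1. Then |b_2| ≤ D - E, and if |D - 2E| ≥ 1 then |b_3| ≤ (D-E)|D-2E|/2. -/

import Mathlib

open Complex Metric Set

lemma aux_hasFPS (g : ℂ → ℂ) (b : ℕ → ℂ)
    (hb : ∀ z ∈ Metric.ball (0:ℂ) 1, HasSum (fun n => b n * z ^ n) (g z)) :
    HasFPowerSeriesOnBall g (FormalMultilinearSeries.ofScalars ℂ b) 0 1 := by
  constructor
  · refine ENNReal.le_of_forall_nnreal_lt (fun r hr => ?_)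
    have hr1 : (r:ℝ) < 1 := by exact_mod_cast hr
    have hmem : ((r:ℝ):ℂ) ∈ Metric.ball (0:ℂ) 1 := by
      simp [Complex.norm_real, _root_.abs_of_nonneg r.2, hr1]
    have hs := (hb _ hmem).summable
    apply FormalMultilinearSeries.le_radius_of_summable
    have : (fun n => ‖FormalMultilinearSeries.ofScalars ℂ b n‖ * (r:ℝ) ^ n)
        = fun n => ‖b n * ((r:ℝ):ℂ) ^ n‖ := by
      funext n
      rw [FormalMultilinearSeries.ofScalars_norm, norm_mul, norm_pow]
      simp [_root_.abs_of_nonneg r.2]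
    rw [this]
    exact hs.norm
  · exact one_pos
  · intro y hy
    rw [mem_emetric_ball_zero_iff] at hy
    have hy' : y ∈ Metric.ball (0:ℂ) 1 := by
      rw [mem_ball_zero_iff]
      rw [enorm_eq_nnnorm] at hy; exact_mod_cast hy
    have := hb y hy'
    simp only [FormalMultilinearSeries.ofScalars_apply_eq, smul_eq_mul, zero_add]
    exact this

lemma aux_itder {f : ℂ → ℂ} {p : FormalMultilinearSeries ℂ ℂ ℂ} {r : ENNReal}
    (h : HasFPowerSeriesOnBall f p 0 r) (n : ℕ) :
    iteratedDeriv n f 0 = ((n.factorial : ℕ) : ℂ) * p.coeff n := by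
  have h1 := h.factorial_smul (1:ℂ) n
  rw [iteratedDeriv_eq_iteratedFDeriv, ← h1, FormalMultilinearSeries.apply_eq_pow_smul_coeff]
  simp

lemma aux_ofScalars_coeff (b : ℕ → ℂ) (n : ℕ) :
    (FormalMultilinearSeries.ofScalars ℂ b).coeff n = b n := by
  have := FormalMultilinearSeries.ofScalars_apply_eq (𝕜 := ℂ) b (1:ℂ) n
  simp only [smul_eq_mul, mul_one, one_pow] at this
  exact this


lemma aux_mobius_ineq (a w : ℂ) (ha : ‖a‖ < 1) (hw : ‖w‖ ≤ 1) :
    ‖w - a‖ ≤ ‖1 - (starRingEnd ℂ) a * w‖ := by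
  have key : Complex.normSq (1 - (starRingEnd ℂ) a * w) - Complex.normSq (w - a)
      = (1 - Complex.normSq a) * (1 - Complex.normSq w) := by
    simp [Complex.normSq_apply, Complex.mul_re, Complex.mul_im, Complex.sub_re, Complex.sub_im,
      Complex.one_re, Complex.one_im, Complex.conj_re, Complex.conj_im]
    ring
  have h1 : Complex.normSq a < 1 := by rw [← Complex.sq_norm]; nlinarith [norm_nonneg a]
  have h2 : Complex.normSq w ≤ 1 := by rw [← Complex.sq_norm]; nlinarith [norm_nonneg w]
  rw [Complex.norm_def, Complex.norm_def]
  apply Real.sqrt_le_sqrt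
  nlinarith
lemma aux_schwarz {ω : ℂ → ℂ} (hd : DifferentiableOn ℂ ω (Metric.ball 0 1))
    (h0 : ω 0 = 0) (hmaps : ∀ z ∈ Metric.ball (0:ℂ) 1, ω z ∈ Metric.ball (0:ℂ) 1)
    {q : FormalMultilinearSeries ℂ ℂ ℂ} (hq : HasFPowerSeriesAt ω q 0) :
    ‖q.coeff 1‖ ≤ 1 ∧ ‖q.coeff 2‖ ≤ 1 - ‖q.coeff 1‖^2 := by
  set ω1 := dslope ω 0 with hω1def
  have hq1 : HasFPowerSeriesAt ω1 q.fslope 0 := hq.has_fpower_series_dslope_fslope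
  have hω10 : ω1 0 = q.coeff 1 := by
    rw [hω1def, dslope_same, hq.deriv]
    rfl
  have hd1 : DifferentiableOn ℂ ω1 (Metric.ball 0 1) :=
    (differentiableOn_dslope (ball_mem_nhds (0:ℂ) one_pos)).mpr hd
  have hb1 : ∀ z ∈ Metric.ball (0:ℂ) 1, ‖ω1 z‖ ≤ 1 := by
    intro z hz
    have hm : MapsTo ω (Metric.ball 0 1) (Metric.closedBall (ω 0) 1) := by
      rw [h0]; exact fun y hy => ball_subset_closedBall (hmaps y hy)
    have := Complex.norm_dslope_le_div_of_mapsTo_ball hd hm hz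
    simpa using this
  have habs1 : ‖q.coeff 1‖ ≤ 1 := by
    rw [← hω10]; exact hb1 0 (mem_ball_self one_pos)
  have hderw1 : HasDerivAt ω1 (q.coeff 2) 0 := by
    have := hq1.hasDerivAt
    have h2 : (q.fslope 1 fun _ => 1) = q.coeff 2 := by
      rw [show (q.fslope 1 fun _ => 1) = q.fslope.coeff 1 from rfl, q.coeff_fslope]
    rwa [h2] at this
  refine ⟨habs1, ?_⟩
  rcases eq_or_lt_of_le habs1 with heq | hlt
  · -- max modulus: ω1 is constant
    have hmax : IsMaxOn (norm ∘ ω1) (Metric.ball (0:ℂ) 1) 0 := by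
      intro z hz
      simp only [Function.comp_apply, Set.mem_setOf_eq, hω10, heq]
      exact hb1 z hz
    have := Complex.eqOn_of_isPreconnected_of_isMaxOn_norm
      (convex_ball (0:ℂ) 1).isPreconnected isOpen_ball hd1 (mem_ball_self one_pos) hmax
    have hconst : ω1 =ᶠ[nhds 0] fun _ => ω1 0 :=
      Filter.eventuallyEq_of_mem (ball_mem_nhds (0:ℂ) one_pos) this
    have : q.coeff 2 = deriv (fun _ : ℂ => ω1 0) 0 := by
      rw [← hderw1.deriv]; exact Filter.EventuallyEq.deriv_eq hconst
    rw [this, deriv_const, heq]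
    simp
  · -- Schwarz-Pick via Möbius
    set a := q.coeff 1 with hadef
    have hne : ∀ z ∈ Metric.ball (0:ℂ) 1, (1 - (starRingEnd ℂ) a * ω1 z) ≠ 0 := by
      intro z hz h
      have : ‖(starRingEnd ℂ) a * ω1 z‖ < 1 := by
        rw [norm_mul, Complex.norm_conj]
        calc ‖a‖ * ‖ω1 z‖ ≤ ‖a‖ * 1 :=
          mul_le_mul_of_nonneg_left (hb1 z hz) (norm_nonneg a)
        _ < 1 := by rw [mul_one]; exact hlt
      rw [sub_eq_zero] at h
      rw [← h] at this
      simp at this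
    set ψ := fun z => (ω1 z - a) / (1 - (starRingEnd ℂ) a * ω1 z) with hψdef
    have hψd : DifferentiableOn ℂ ψ (Metric.ball 0 1) := by
      apply DifferentiableOn.div (hd1.sub_const a)
        ((differentiableOn_const 1).sub (hd1.const_mul _)) hne
    have hψ0 : ψ 0 = 0 := by simp [hψdef, hω10, ← hadef]
    have hψle : ∀ z ∈ Metric.ball (0:ℂ) 1, ‖ψ z‖ ≤ 1 := by
      intro z hz
      rw [hψdef]
      simp only [norm_div]
      rw [div_le_one (norm_pos_iff.mpr (hne z hz))]
      exact aux_mobius_ineq a (ω1 z) hlt (hb1 z hz)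
    -- derivative of ψ at 0
    have hden0 : (1 - (starRingEnd ℂ) a * ω1 0) ≠ 0 := hne 0 (mem_ball_self one_pos)
    have hnum : HasDerivAt (fun z => ω1 z - a) (q.coeff 2) 0 := hderw1.sub_const a
    have hdend : HasDerivAt (fun z => 1 - (starRingEnd ℂ) a * ω1 z)
        (-((starRingEnd ℂ) a * q.coeff 2)) 0 := by
      have := (hderw1.const_mul ((starRingEnd ℂ) a)).const_sub 1
      simpa using this
    have hψder : HasDerivAt ψ (q.coeff 2 / (1 - (starRingEnd ℂ) a * a)) 0 := by
      have h := hnum.div hdend hden0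
      have e0 : ω1 0 = a := hω10
      rw [e0] at h hden0
      have : (q.coeff 2 * (1 - (starRingEnd ℂ) a * a) -
          (a - a) * -((starRingEnd ℂ) a * q.coeff 2)) / (1 - (starRingEnd ℂ) a * a) ^ 2
          = q.coeff 2 / (1 - (starRingEnd ℂ) a * a) := by
        field_simp
        ring
      rwa [this] at h
    -- Schwarz bound: |deriv ψ 0| ≤ 1
    have hSch : ‖deriv ψ 0‖ ≤ 1 := by
      by_contra hcon
      push_neg at hcon
      set R : ℝ := (1 + ‖deriv ψ 0‖) / 2 with hR
      have hR1 : 1 < R := by rw [hR]; linarith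
      have hRd : R < ‖deriv ψ 0‖ := by rw [hR]; linarith
      have hm : MapsTo ψ (Metric.ball (0:ℂ) 1) (Metric.closedBall (ψ 0) R) := by
        intro z hz
        rw [hψ0, mem_closedBall_zero_iff]
        exact le_trans (hψle z hz) hR1.le
      have := Complex.norm_deriv_le_div_of_mapsTo_ball hψd hm one_pos
      rw [div_one] at this
      linarith
    rw [hψder.deriv] at hSch
    have hden_abs : ‖1 - (starRingEnd ℂ) a * a‖ = 1 - ‖a‖ ^ 2 := by
      have : (starRingEnd ℂ) a * a = (Complex.normSq a : ℂ) := by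
        rw [mul_comm, Complex.mul_conj]
      rw [this, ← Complex.ofReal_one, ← Complex.ofReal_sub, Complex.norm_real, Real.norm_eq_abs,
        _root_.abs_of_nonneg, Complex.sq_norm]
      rw [← Complex.sq_norm]
      nlinarith [norm_nonneg a]
    rw [norm_div, hden_abs, div_le_one (by nlinarith [hlt, norm_nonneg a])] at hSch
    exact hSch

lemma aux_rel (D E : ℝ) (hE : -1 ≤ E) (hED : E < D) (hD : D ≤ 1)
    (g ω : ℂ → ℂ) (b : ℕ → ℂ) (c1 c2 : ℂ)
    (hgz : g 0 = 0) (hg1z : deriv g 0 = 1) (hg2z : deriv (deriv g) 0 = 2 * b 2)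
    (hg3z : deriv (deriv (deriv g)) 0 = 6 * b 3)
    (hω0 : ω 0 = 0) (hw1z : deriv ω 0 = c1) (hw2z : deriv (deriv ω) 0 = 2 * c2)
    (hgOn : AnalyticOnNhd ℂ g (Metric.ball (0:ℂ) 1))
    (hωOn : AnalyticOnNhd ℂ ω (Metric.ball (0:ℂ) 1))
    (hωm : ∀ z ∈ Metric.ball (0:ℂ) 1, ω z ∈ Metric.ball (0:ℂ) 1)
    (hωeq : ∀ z ∈ Metric.ball (0:ℂ) 1, z ≠ 0 →
      z * deriv g z / g z = (1 + (D : ℂ) * ω z) / (1 + (E : ℂ) * ω z)) :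
    b 2 = ((D:ℂ) - (E:ℂ)) * c1 ∧
      2 * b 3 = ((D:ℂ) - (E:ℂ)) * c2 + ((D:ℂ) - 2*(E:ℂ)) * (b 2) * c1 := by
  have hEabs : |E| ≤ 1 := abs_le.mpr ⟨hE, le_trans (le_of_lt hED) hD⟩
  have hDabs : |D| ≤ 1 := abs_le.mpr ⟨le_trans hE (le_of_lt hED), hD⟩
  -- nonvanishing of 1 + t * ω z
  have hden : ∀ (t : ℝ), |t| ≤ 1 → ∀ z ∈ Metric.ball (0:ℂ) 1, (1 + (t:ℂ) * ω z) ≠ 0 := by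
    intro t ht z hz h
    have h1 : ‖(t:ℂ) * ω z‖ < 1 := by
      rw [norm_mul, Complex.norm_real, Real.norm_eq_abs]
      have h2 : ‖ω z‖ < 1 := mem_ball_zero_iff.mp (hωm z hz)
      nlinarith [norm_nonneg (ω z), abs_nonneg t]
    have : (t:ℂ) * ω z = -1 := by linear_combination h
    rw [this] at h1
    simp at h1
  -- g is nonzero away from 0
  have hgne : ∀ z ∈ Metric.ball (0:ℂ) 1, z ≠ 0 → g z ≠ 0 := by
    intro z hz hz0 hgz'
    have h := hωeq z hz hz0
    rw [hgz', div_zero] at h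
    exact (div_ne_zero (hden D hDabs z hz) (hden E hEabs z hz)) h.symm
  -- the fundamental identity
  have hA0 : (fun z => z * deriv g z * (1 + (E:ℂ) * ω z) - g z * (1 + (D:ℂ) * ω z))
      =ᶠ[nhds (0:ℂ)] (fun _ => (0:ℂ)) := by
    filter_upwards [ball_mem_nhds (0:ℂ) one_pos] with z hz
    by_cases hz0 : z = 0
    · simp [hz0, hgz]
    · have h := hωeq z hz hz0
      rw [div_eq_div_iff (hgne z hz hz0) (hden E hEabs z hz)] at h
      linear_combination h
  -- analyticity of derivatives
  have hg1On := hgOn.deriv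
  have hg2On := hg1On.deriv
  have hg3On := hg2On.deriv
  have hw1On := hωOn.deriv
  have hw2On := hw1On.deriv
  -- pointwise HasDerivAt facts
  have Hg : ∀ z ∈ Metric.ball (0:ℂ) 1, HasDerivAt g (deriv g z) z :=
    fun z hz => ((hgOn z hz).differentiableAt).hasDerivAt
  have H1 : ∀ z ∈ Metric.ball (0:ℂ) 1, HasDerivAt (deriv g) (deriv (deriv g) z) z :=
    fun z hz => ((hg1On z hz).differentiableAt).hasDerivAt
  have H2 : ∀ z ∈ Metric.ball (0:ℂ) 1,
      HasDerivAt (deriv (deriv g)) (deriv (deriv (deriv g)) z) z :=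
    fun z hz => ((hg2On z hz).differentiableAt).hasDerivAt
  have H3 : ∀ z ∈ Metric.ball (0:ℂ) 1,
      HasDerivAt (deriv (deriv (deriv g))) (deriv (deriv (deriv (deriv g))) z) z :=
    fun z hz => ((hg3On z hz).differentiableAt).hasDerivAt
  have Hw : ∀ z ∈ Metric.ball (0:ℂ) 1, HasDerivAt ω (deriv ω z) z :=
    fun z hz => ((hωOn z hz).differentiableAt).hasDerivAt
  have Hw1 : ∀ z ∈ Metric.ball (0:ℂ) 1, HasDerivAt (deriv ω) (deriv (deriv ω) z) z :=
    fun z hz => ((hw1On z hz).differentiableAt).hasDerivAt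
  have Hw2 : ∀ z ∈ Metric.ball (0:ℂ) 1,
      HasDerivAt (deriv (deriv ω)) (deriv (deriv (deriv ω)) z) z :=
    fun z hz => ((hw2On z hz).differentiableAt).hasDerivAt
  have h0mem : (0:ℂ) ∈ Metric.ball (0:ℂ) 1 := mem_ball_self one_pos
  -- first symbolic derivative
  have hA1 : ∀ z ∈ Metric.ball (0:ℂ) 1,
      HasDerivAt (fun z => z * deriv g z * (1 + (E:ℂ) * ω z) - g z * (1 + (D:ℂ) * ω z))
        ((1 * deriv g z + z * deriv (deriv g) z) * (1 + (E:ℂ) * ω z)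
          + (z * deriv g z) * ((E:ℂ) * deriv ω z)
          - (deriv g z * (1 + (D:ℂ) * ω z) + g z * ((D:ℂ) * deriv ω z))) z := by
    intro z hz
    exact (((hasDerivAt_id z).mul (H1 z hz)).mul
        (((Hw z hz).const_mul (E:ℂ)).const_add 1)).sub
      ((Hg z hz).mul (((Hw z hz).const_mul (D:ℂ)).const_add 1))
  have e1 : (fun z => (1 * deriv g z + z * deriv (deriv g) z) * (1 + (E:ℂ) * ω z)
          + (z * deriv g z) * ((E:ℂ) * deriv ω z)
          - (deriv g z * (1 + (D:ℂ) * ω z) + g z * ((D:ℂ) * deriv ω z)))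
      =ᶠ[nhds (0:ℂ)] (fun _ => (0:ℂ)) := by
    have hdA := hA0.deriv
    filter_upwards [hdA, ball_mem_nhds (0:ℂ) one_pos] with z h1 hz
    rw [← (hA1 z hz).deriv, h1]
    simp
  -- second symbolic derivative
  have hA2 : ∀ z ∈ Metric.ball (0:ℂ) 1,
      HasDerivAt (fun z => (1 * deriv g z + z * deriv (deriv g) z) * (1 + (E:ℂ) * ω z)
          + (z * deriv g z) * ((E:ℂ) * deriv ω z)
          - (deriv g z * (1 + (D:ℂ) * ω z) + g z * ((D:ℂ) * deriv ω z)))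
        (((1 * deriv (deriv g) z + (1 * deriv (deriv g) z + z * deriv (deriv (deriv g)) z))
            * (1 + (E:ℂ) * ω z)
          + (1 * deriv g z + z * deriv (deriv g) z) * ((E:ℂ) * deriv ω z))
         + ((1 * deriv g z + z * deriv (deriv g) z) * ((E:ℂ) * deriv ω z)
            + (z * deriv g z) * ((E:ℂ) * deriv (deriv ω) z))
         - ((deriv (deriv g) z * (1 + (D:ℂ) * ω z) + deriv g z * ((D:ℂ) * deriv ω z))
            + (deriv g z * ((D:ℂ) * deriv ω z) + g z * ((D:ℂ) * deriv (deriv ω) z)))) z := by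
    intro z hz
    exact (((((H1 z hz).const_mul 1).add ((hasDerivAt_id z).mul (H2 z hz))).mul
          (((Hw z hz).const_mul (E:ℂ)).const_add 1)).add
        (((hasDerivAt_id z).mul (H1 z hz)).mul ((Hw1 z hz).const_mul (E:ℂ)))).sub
      (((H1 z hz).mul (((Hw z hz).const_mul (D:ℂ)).const_add 1)).add
        ((Hg z hz).mul ((Hw1 z hz).const_mul (D:ℂ))))
  have e2 : (fun z => ((1 * deriv (deriv g) z
            + (1 * deriv (deriv g) z + z * deriv (deriv (deriv g)) z)) * (1 + (E:ℂ) * ω z)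
          + (1 * deriv g z + z * deriv (deriv g) z) * ((E:ℂ) * deriv ω z))
         + ((1 * deriv g z + z * deriv (deriv g) z) * ((E:ℂ) * deriv ω z)
            + (z * deriv g z) * ((E:ℂ) * deriv (deriv ω) z))
         - ((deriv (deriv g) z * (1 + (D:ℂ) * ω z) + deriv g z * ((D:ℂ) * deriv ω z))
            + (deriv g z * ((D:ℂ) * deriv ω z) + g z * ((D:ℂ) * deriv (deriv ω) z))))
      =ᶠ[nhds (0:ℂ)] (fun _ => (0:ℂ)) := by
    have hdA := e1.deriv
    filter_upwards [hdA, ball_mem_nhds (0:ℂ) one_pos] with z h1 hz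
    rw [← (hA2 z hz).deriv, h1]
    simp
  have rel2 := e2.self_of_nhds
  simp only at rel2
  rw [hω0, hgz, hg1z, hg2z, hw1z] at rel2
  have hb2 : b 2 = ((D:ℂ) - (E:ℂ)) * c1 := by linear_combination rel2 / 2
  -- third derivative at 0
  have e3 : deriv (fun z => ((1 * deriv (deriv g) z
            + (1 * deriv (deriv g) z + z * deriv (deriv (deriv g)) z)) * (1 + (E:ℂ) * ω z)
          + (1 * deriv g z + z * deriv (deriv g) z) * ((E:ℂ) * deriv ω z))
         + ((1 * deriv g z + z * deriv (deriv g) z) * ((E:ℂ) * deriv ω z)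
            + (z * deriv g z) * ((E:ℂ) * deriv (deriv ω) z))
         - ((deriv (deriv g) z * (1 + (D:ℂ) * ω z) + deriv g z * ((D:ℂ) * deriv ω z))
            + (deriv g z * ((D:ℂ) * deriv ω z) + g z * ((D:ℂ) * deriv (deriv ω) z)))) 0
      = 0 := by
    have := e2.deriv.self_of_nhds
    rw [this]
    simp
  have d1 := (((H2 0 h0mem).const_mul (1:ℂ)).add (((H2 0 h0mem).const_mul (1:ℂ)).add
      ((hasDerivAt_id (0:ℂ)).mul (H3 0 h0mem)))).mul
      (((Hw 0 h0mem).const_mul (E:ℂ)).const_add 1)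
  have d2 := (((H1 0 h0mem).const_mul (1:ℂ)).add
      ((hasDerivAt_id (0:ℂ)).mul (H2 0 h0mem))).mul ((Hw1 0 h0mem).const_mul (E:ℂ))
  have d4 := ((hasDerivAt_id (0:ℂ)).mul (H1 0 h0mem)).mul ((Hw2 0 h0mem).const_mul (E:ℂ))
  have d5 := (H2 0 h0mem).mul (((Hw 0 h0mem).const_mul (D:ℂ)).const_add 1)
  have d6 := (H1 0 h0mem).mul ((Hw1 0 h0mem).const_mul (D:ℂ))
  have d8 := (Hg 0 h0mem).mul ((Hw2 0 h0mem).const_mul (D:ℂ))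
  have hA3 := ((d1.add d2).add (d2.add d4)).sub ((d5.add d6).add (d6.add d8))
  have rel3 := hA3.deriv.symm.trans e3
  simp only [id_eq, Pi.mul_apply, Pi.add_apply] at rel3
  rw [hω0, hgz, hg1z, hg2z, hg3z, hw1z, hw2z] at rel3
  have h2b3 : 2 * b 3 = ((D:ℂ) - (E:ℂ)) * c2 + ((D:ℂ) - 2*(E:ℂ)) * (b 2) * c1 := by
    linear_combination rel3 / 6
  exact ⟨hb2, h2b3⟩


theorem stmt_18 (D E : ℝ) (hE : -1 ≤ E) (hED : E < D) (hD : D ≤ 1)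
    (g : ℂ → ℂ) (b : ℕ → ℂ)
    (hb0 : b 0 = 0) (hb1 : b 1 = 1)
    (hb : ∀ z ∈ Metric.ball (0:ℂ) 1, HasSum (fun n => b n * z ^ n) (g z))
    (hsub : (∃ ω : ℂ → ℂ, AnalyticOn ℂ ω (Metric.ball (0:ℂ) 1) ∧ ω 0 = 0 ∧ (∀ z ∈ Metric.ball (0:ℂ) 1, ω z ∈ Metric.ball (0:ℂ) 1) ∧
          (∀ z ∈ Metric.ball (0:ℂ) 1, z ≠ 0 → z * deriv g z / g z = (1 + (D : ℂ) * ω z) / (1 + (E : ℂ) * ω z)))) :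
    ‖b 2‖ ≤ D - E ∧
      (1 ≤ |D - 2 * E| → ‖b 3‖ ≤ (D - E) * |D - 2 * E| / 2) := by
  obtain ⟨ω, hωa, hω0, hωm, hωeq⟩ := hsub
  have hg := aux_hasFPS g b hb
  -- values of g at 0
  have h2 := aux_itder hg 2
  have h3 := aux_itder hg 3
  rw [show (3:ℕ) = 2 + 1 from rfl, iteratedDeriv_succ] at h3
  rw [show (2:ℕ) = 1 + 1 from rfl, iteratedDeriv_succ, iteratedDeriv_one] at h2 h3
  rw [aux_ofScalars_coeff] at h2 h3
  have hgz : g 0 = 0 := by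
    have h := hg.coeff_zero (fun _ => (1:ℂ))
    rw [FormalMultilinearSeries.ofScalars_apply_eq, hb0] at h
    simpa using h.symm
  have hg1z : deriv g 0 = 1 := by
    have := hg.hasFPowerSeriesAt.deriv
    rw [this, FormalMultilinearSeries.ofScalars_apply_eq, hb1]
    simp
  have hg2z : deriv (deriv g) 0 = 2 * b 2 := by rw [h2]; norm_num [Nat.factorial]
  have hg3z : deriv (deriv (deriv g)) 0 = 6 * b 3 := by rw [h3]; norm_num [Nat.factorial]
  -- analyticity
  have hgOn : AnalyticOnNhd ℂ g (Metric.ball (0:ℂ) 1) := by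
    intro z hz
    apply hg.analyticAt_of_mem
    rw [mem_emetric_ball_zero_iff, enorm_eq_nnnorm]
    exact_mod_cast mem_ball_zero_iff.mp hz
  have hωOn : AnalyticOnNhd ℂ ω (Metric.ball (0:ℂ) 1) :=
    (isOpen_ball.analyticOn_iff_analyticOnNhd).mp hωa
  -- power series of ω at 0
  obtain ⟨q, hq⟩ := hωOn 0 (mem_ball_self one_pos)
  obtain ⟨rq, hqb⟩ := hq
  have hq : HasFPowerSeriesAt ω q 0 := hqb.hasFPowerSeriesAt
  have hw1z : deriv ω 0 = q.coeff 1 := by rw [hq.deriv]; rfl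
  have hw2z : deriv (deriv ω) 0 = 2 * q.coeff 2 := by
    have h2' := aux_itder hqb 2
    rw [show (2:ℕ) = 1 + 1 from rfl, iteratedDeriv_succ, iteratedDeriv_one] at h2'
    rw [h2']
    norm_num [Nat.factorial]
  -- coefficient relations
  obtain ⟨hb2, h2b3⟩ := aux_rel D E hE hED hD g ω b (q.coeff 1) (q.coeff 2)
    hgz hg1z hg2z hg3z hω0 hw1z hw2z hgOn hωOn hωm hωeq
  -- Schwarz bounds
  have hωd : DifferentiableOn ℂ ω (Metric.ball (0:ℂ) 1) := hωOn.differentiableOn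
  obtain ⟨hc1, hc2⟩ := aux_schwarz hωd hω0 hωm hq
  have hDE : (0:ℝ) < D - E := sub_pos.mpr hED
  have eDE : ‖(D:ℂ) - (E:ℂ)‖ = D - E := by
    rw [← Complex.ofReal_sub, Complex.norm_real, Real.norm_eq_abs, _root_.abs_of_pos hDE]
  constructor
  · rw [hb2, norm_mul, eDE]
    nlinarith [norm_nonneg (q.coeff 1)]
  · intro hK
    have h2b3' : 2 * b 3 = ((D:ℂ) - (E:ℂ)) * q.coeff 2
        + ((D:ℂ) - (E:ℂ)) * (((D:ℂ) - 2*(E:ℂ)) * (q.coeff 1)^2) := by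
      rw [hb2] at h2b3
      linear_combination h2b3
    have eD2E : ‖(D:ℂ) - 2*(E:ℂ)‖ = |D - 2*E| := by
      rw [show ((D:ℂ) - 2*(E:ℂ)) = ((D - 2*E : ℝ) : ℂ) by push_cast; ring, Complex.norm_real, Real.norm_eq_abs]
    set t := ‖q.coeff 1‖ ^ 2 with ht
    have habs : ‖2 * b 3‖ ≤ (D - E) * (1 - t) + (D - E) * (|D - 2*E| * t) := by
      rw [h2b3']
      refine le_trans (norm_add_le _ _) ?_
      have e1 : ‖((D:ℂ) - (E:ℂ)) * q.coeff 2‖ ≤ (D - E) * (1 - t) := by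
        rw [norm_mul, eDE]
        exact mul_le_mul_of_nonneg_left hc2 hDE.le
      have e2 : ‖((D:ℂ) - (E:ℂ)) * (((D:ℂ) - 2*(E:ℂ)) * (q.coeff 1)^2)‖
          = (D - E) * (|D - 2*E| * t) := by
        rw [norm_mul, norm_mul, norm_pow, eDE, eD2E]
      rw [e2]
      linarith
    have habs2 : ‖2 * b 3‖ = 2 * ‖b 3‖ := by
      rw [norm_mul]
      norm_num
    have htle : t ≤ 1 := by nlinarith [norm_nonneg (q.coeff 2), hc2]
    have htnn : 0 ≤ t := sq_nonneg _
    have key : 0 ≤ (D - E) * ((|D - 2*E| - 1) * (1 - t)) :=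
      mul_nonneg hDE.le (mul_nonneg (by linarith) (by linarith))
    rw [habs2] at habs
    nlinarith
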